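/- arXiv:2503.10704 — 3 statements merged into one kernel-verified Lean document; each statement's English description precedes it below -/
import Mathlib

section
/- For every s ∈ [0,1] and every N ∈ ℕ, inf_{P̂} sup_{P ∈ S(s)} P( KL(P ‖ P̂(D_N(P))) ≥ s²/2 ) ≥ 1/2, where the infimum is taken over all estimators P̂, i.e., over all measurable functions of the dataset D_N(P) with values in the probability distributions on Ω³. -/
/-!
Statement 2 (the paper's Theorem 2, KL version): with Ω = {0,1}, for every s ∈ [0,1]
and every N ∈ ℕ,
  inf_{P̂} sup_{P ∈ S(s)} P( KL(P ‖ P̂(D_N(P))) ≥ s²/2 ) ≥ 1/2,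
the infimum being over all estimators, i.e. all (automatically measurable, since the
sample space is finite) functions of the dataset D_N(P) with values in the probability
distributions on Ω³.  All logarithms are base 2.
-/

open scoped Classical BigOperators

noncomputable section

/-- The binary alphabet Ω = {0,1}. -/
abbrev Om : Type := Bool

/-- Probability distributions on Ω³ (coordinates named (X, Y, Z)). -/
def Dist3 : Type := {p : Om × Om × Om → ℝ // (∀ w, 0 ≤ p w) ∧ ∑ w, p w = 1}

/-- KL divergence with base-2 logarithms, `+∞` in the absence of absolute continuity. -/
def klDiv2 (p q : Om × Om × Om → ℝ) : EReal :=
  if ∀ w, q w = 0 → p w = 0 then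
    (((∑ w, if p w = 0 then 0 else p w * Real.logb 2 (p w / q w)) : ℝ) : EReal)
  else ⊤

/-- Conditional mutual information `I(X ; Z | Y)` (base-2 logarithms) of a joint
distribution `p` on Ω³ with coordinates ordered as (X, Y, Z). -/
def cmiXZ_Y (p : Om × Om × Om → ℝ) : ℝ :=
  ∑ x : Om, ∑ z : Om, ∑ y : Om,
    (if p (x, y, z) = 0 then 0
     else p (x, y, z) *
       Real.logb 2 ((p (x, y, z) * (∑ x' : Om, ∑ z' : Om, p (x', y, z'))) /
         ((∑ z' : Om, p (x, y, z')) * (∑ x' : Om, p (x', y, z)))))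

/-- The constrained class `S(s) = {P on Ω³ : I(X;Z|Y) ≤ s}`. -/
def Sclass (s : ℝ) : Set Dist3 := {P | cmiXZ_Y P.1 ≤ s}

/-- (X,Y)-marginal. -/
def margXY (p : Om × Om × Om → ℝ) : Om × Om → ℝ := fun w => ∑ z : Om, p (w.1, w.2, z)

/-- (Y,Z)-marginal. -/
def margYZ (p : Om × Om × Om → ℝ) : Om × Om → ℝ := fun w => ∑ x : Om, p (x, w.1, w.2)

/-- The dataset `D_N(P)`: `N` samples from the (X,Y)-marginal together with `N`
further samples from the (Y,Z)-marginal. -/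
def Dataset (N : ℕ) : Type := (Fin N → Om × Om) × (Fin N → Om × Om)

instance (N : ℕ) : Fintype (Dataset N) := by unfold Dataset; infer_instance

/-- The probability that a distribution `p` on Ω³ assigns to a realization `d` of the
dataset `D_N(p)` (all samples independent, the first `N` drawn from the (X,Y)-marginal
and the remaining `N` from the (Y,Z)-marginal). -/
def dataProb {N : ℕ} (p : Om × Om × Om → ℝ) (d : Dataset N) : ℝ :=
  (∏ i : Fin N, margXY p (d.1 i)) * (∏ i : Fin N, margYZ p (d.2 i))

/-- The probability, under the data-generating distribution `p`, of an event `E`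
depending on the dataset. -/
def dataEventProb {N : ℕ} (p : Om × Om × Om → ℝ) (E : Dataset N → Prop) : ℝ :=
  ∑ d : Dataset N, if E d then dataProb p d else 0


namespace MB

/-- The two-point family: `Y` is constant (= `false`), `X` and `Z` are uniform bits with
correlation `ε` given `Y`.  -/
def pd (ε : ℝ) : Om × Om × Om → ℝ :=
  fun w => if w.2.1 then 0 else if w.1 = w.2.2 then (1+ε)/4 else (1-ε)/4

/-- Mutual-information profile of the family. -/
def g (ε : ℝ) : ℝ := ((1+ε) * Real.logb 2 (1+ε) + (1-ε) * Real.logb 2 (1-ε)) / 2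

lemma pd_nonneg {ε : ℝ} (h1 : -1 ≤ ε) (h2 : ε ≤ 1) (w : Om × Om × Om) : 0 ≤ pd ε w := by
  unfold pd; split_ifs <;> linarith

lemma sum_pd (ε : ℝ) : ∑ w, pd ε w = 1 := by
  simp [Fintype.sum_prod_type, Fintype.sum_bool, pd]; ring

lemma g_neg (ε : ℝ) : g (-ε) = g ε := by unfold g; ring_nf

lemma g_zero : g 0 = 0 := by simp [g]

lemma margXY_pd (ε : ℝ) : margXY (pd ε) = fun w => if w.2 then 0 else 1/2 := by
  funext w
  rcases w with ⟨x, y⟩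
  cases y <;> cases x <;> simp [margXY, pd, Fintype.sum_bool] <;> ring

lemma margYZ_pd (ε : ℝ) : margYZ (pd ε) = fun w => if w.1 then 0 else 1/2 := by
  funext w
  rcases w with ⟨y, z⟩
  cases y <;> cases z <;> simp [margYZ, pd, Fintype.sum_bool] <;> ring

lemma cmi_pd {ε : ℝ} (h1 : -1 < ε) (h2 : ε < 1) : cmiXZ_Y (pd ε) = g ε := by
  have ha : (1+ε)/4 ≠ 0 := ne_of_gt (by linarith)
  have hb : (1-ε)/4 ≠ 0 := ne_of_gt (by linarith)
  simp only [cmiXZ_Y, Fintype.sum_bool, pd]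
  norm_num [ha, hb]
  rw [show (1 + ε) / 4 * ((1 + ε) / 4 + (1 - ε) / 4 + ((1 - ε) / 4 + (1 + ε) / 4)) /
        (((1 + ε) / 4 + (1 - ε) / 4) * ((1 + ε) / 4 + (1 - ε) / 4)) = 1 + ε from by ring,
      show (1 - ε) / 4 * ((1 + ε) / 4 + (1 - ε) / 4 + ((1 - ε) / 4 + (1 + ε) / 4)) /
        (((1 + ε) / 4 + (1 - ε) / 4) * ((1 - ε) / 4 + (1 + ε) / 4)) = 1 - ε from by ring,
      show (1 - ε) / 4 * ((1 + ε) / 4 + (1 - ε) / 4 + ((1 - ε) / 4 + (1 + ε) / 4)) /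
        (((1 - ε) / 4 + (1 + ε) / 4) * ((1 + ε) / 4 + (1 - ε) / 4)) = 1 - ε from by ring,
      show (1 + ε) / 4 * ((1 + ε) / 4 + (1 - ε) / 4 + ((1 - ε) / 4 + (1 + ε) / 4)) /
        (((1 - ε) / 4 + (1 + ε) / 4) * ((1 - ε) / 4 + (1 + ε) / 4)) = 1 + ε from by ring]
  unfold g; ring

/-- The key two-point inequality: for any reference distribution `q`, the two KL
divergences together exceed twice the Jensen–Shannon-type quantity. -/
lemma key_real (a b q1 q2 q3 q4 : ℝ) (ha : 0 < a) (hb : 0 < b) (hab : a + b = 1/2)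
    (hq1 : 0 < q1) (hq2 : 0 < q2) (hq3 : 0 < q3) (hq4 : 0 < q4)
    (hqs : q1 + q2 + q3 + q4 ≤ 1) :
    2 * ((4*a * Real.logb 2 (4*a) + 4*b * Real.logb 2 (4*b)) / 2) ≤
      (a * Real.logb 2 (a/q1) + b * Real.logb 2 (b/q2)
        + b * Real.logb 2 (b/q3) + a * Real.logb 2 (a/q4))
      + (b * Real.logb 2 (b/q1) + a * Real.logb 2 (a/q2)
        + a * Real.logb 2 (a/q3) + b * Real.logb 2 (b/q4)) := by
  have l2 : (0:ℝ) < Real.log 2 := Real.log_pos one_lt_two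
  have h4 : Real.log 4 = 2 * Real.log 2 := by
    rw [show (4:ℝ) = 2^2 by norm_num, Real.log_pow]; push_cast; ring
  have e1 : Real.log (4*q1) = Real.log 4 + Real.log q1 := Real.log_mul (by norm_num) hq1.ne'
  have e2 : Real.log (4*q2) = Real.log 4 + Real.log q2 := Real.log_mul (by norm_num) hq2.ne'
  have e3 : Real.log (4*q3) = Real.log 4 + Real.log q3 := Real.log_mul (by norm_num) hq3.ne'
  have e4 : Real.log (4*q4) = Real.log 4 + Real.log q4 := Real.log_mul (by norm_num) hq4.ne'
  have k1 : Real.log (4*q1) ≤ 4*q1 - 1 := Real.log_le_sub_one_of_pos (by linarith)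
  have k2 : Real.log (4*q2) ≤ 4*q2 - 1 := Real.log_le_sub_one_of_pos (by linarith)
  have k3 : Real.log (4*q3) ≤ 4*q3 - 1 := Real.log_le_sub_one_of_pos (by linarith)
  have k4 : Real.log (4*q4) ≤ 4*q4 - 1 := Real.log_le_sub_one_of_pos (by linarith)
  have hsum : Real.log q1 + Real.log q2 + Real.log q3 + Real.log q4 ≤ -8 * Real.log 2 := by
    nlinarith [k1, k2, k3, k4, e1, e2, e3, e4, h4]
  simp only [Real.logb, Real.log_div ha.ne' hq1.ne', Real.log_div hb.ne' hq2.ne',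
    Real.log_div hb.ne' hq3.ne', Real.log_div ha.ne' hq4.ne',
    Real.log_div hb.ne' hq1.ne', Real.log_div ha.ne' hq2.ne',
    Real.log_div ha.ne' hq3.ne', Real.log_div hb.ne' hq4.ne',
    Real.log_mul (by norm_num : (4:ℝ) ≠ 0) ha.ne',
    Real.log_mul (by norm_num : (4:ℝ) ≠ 0) hb.ne', h4]
  rw [← mul_le_mul_iff_of_pos_right l2]
  field_simp
  have c1 : a * Real.log q1 + b * Real.log q1 = (1/2) * Real.log q1 := by rw [← add_mul, hab]
  have c2 : a * Real.log q2 + b * Real.log q2 = (1/2) * Real.log q2 := by rw [← add_mul, hab]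
  have c3 : a * Real.log q3 + b * Real.log q3 = (1/2) * Real.log q3 := by rw [← add_mul, hab]
  have c4 : a * Real.log q4 + b * Real.log q4 = (1/2) * Real.log q4 := by rw [← add_mul, hab]
  have c5 : 8 * (a + b) * Real.log 2 = 4 * Real.log 2 := by rw [hab]; ring
  nlinarith [hsum, c1, c2, c3, c4, c5]

lemma klsum_eq {ε : ℝ} (h1 : -1 < ε) (h2 : ε < 1) (q : Om × Om × Om → ℝ) :
    (∑ w, if pd ε w = 0 then 0 else pd ε w * Real.logb 2 (pd ε w / q w))
    = (1+ε)/4 * Real.logb 2 ((1+ε)/4 / q (false,false,false))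
      + (1-ε)/4 * Real.logb 2 ((1-ε)/4 / q (false,false,true))
      + (1-ε)/4 * Real.logb 2 ((1-ε)/4 / q (true,false,false))
      + (1+ε)/4 * Real.logb 2 ((1+ε)/4 / q (true,false,true)) := by
  have ha : (1+ε)/4 ≠ 0 := ne_of_gt (by linarith)
  have hb : (1-ε)/4 ≠ 0 := ne_of_gt (by linarith)
  simp only [Fintype.sum_prod_type, Fintype.sum_bool, pd]
  norm_num [ha, hb]
  ring

lemma pd_pos_of_yfalse {ε : ℝ} (h1 : -1 < ε) (h2 : ε < 1) (w : Om × Om × Om)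
    (hw : w.2.1 = false) : 0 < pd ε w := by
  unfold pd; rw [hw]; simp only [Bool.false_eq_true, if_false]
  split_ifs <;> linarith

lemma kl_lower {ε s' : ℝ} (h1 : -1 < ε) (h2 : ε < 1) (hs' : s' ≤ g ε) (q : Dist3) :
    ((s' : ℝ) : EReal) ≤ klDiv2 (pd ε) q.1 ∨ ((s' : ℝ) : EReal) ≤ klDiv2 (pd (-ε)) q.1 := by
  have h1' : -1 < -ε := by linarith
  have h2' : -ε < 1 := by linarith
  by_cases hq : ∀ w : Om × Om × Om, w.2.1 = false → 0 < q.1 w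
  · have cond : ∀ w, q.1 w = 0 → pd ε w = 0 := by
      intro w h0
      rcases Bool.eq_false_or_eq_true w.2.1 with hw | hw
      · unfold pd; rw [hw]; simp
      · exact absurd h0 (ne_of_gt (hq w hw))
    have cond' : ∀ w, q.1 w = 0 → pd (-ε) w = 0 := by
      intro w h0
      rcases Bool.eq_false_or_eq_true w.2.1 with hw | hw
      · unfold pd; rw [hw]; simp
      · exact absurd h0 (ne_of_gt (hq w hw))
    rw [klDiv2, if_pos cond, klDiv2, if_pos cond']
    rw [klsum_eq h1 h2 q.1, klsum_eq h1' h2' q.1]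
    have hq1 := hq (false,false,false) rfl
    have hq2 := hq (false,false,true) rfl
    have hq3 := hq (true,false,false) rfl
    have hq4 := hq (true,false,true) rfl
    have hqs : q.1 (false,false,false) + q.1 (false,false,true)
        + q.1 (true,false,false) + q.1 (true,false,true) ≤ 1 := by
      have hsum := q.2.2
      have hnn := q.2.1
      simp only [Fintype.sum_prod_type, Fintype.sum_bool] at hsum
      have n1 := hnn (true,true,true); have n2 := hnn (true,true,false)
      have n3 := hnn (false,true,true); have n4 := hnn (false,true,false)
      linarith
    have hkey := key_real ((1+ε)/4) ((1-ε)/4) (q.1 (false,false,false))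
      (q.1 (false,false,true)) (q.1 (true,false,false)) (q.1 (true,false,true))
      (by linarith) (by linarith) (by ring) hq1 hq2 hq3 hq4 hqs
    rw [show 4*((1+ε)/4) = 1+ε from by ring, show 4*((1-ε)/4) = 1-ε from by ring] at hkey
    by_contra hcon
    push_neg at hcon
    obtain ⟨hA, hB⟩ := hcon
    rw [show (1 + -ε) = 1 - ε from by ring, show (1 - -ε) = 1 + ε from by ring] at hB
    have hA' := (EReal.coe_lt_coe_iff).mp hA
    have hB' := (EReal.coe_lt_coe_iff).mp hB
    unfold g at hs'
    linarith
  · left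
    push_neg at hq
    obtain ⟨w, hw, hqw⟩ := hq
    have hq0 : q.1 w = 0 := le_antisymm hqw (q.2.1 w)
    have hcond : ¬ (∀ w, q.1 w = 0 → pd ε w = 0) := by
      intro hc
      exact absurd (hc w hq0) (ne_of_gt (pd_pos_of_yfalse h1 h2 w hw))
    rw [klDiv2, if_neg hcond]
    exact le_top

lemma g_cont : ContinuousOn g (Set.Icc 0 (31/32 : ℝ)) := by
  have h1 : ContinuousOn (fun ε : ℝ => Real.log (1+ε)) (Set.Icc 0 (31/32 : ℝ)) := by
    apply Real.continuousOn_log.comp (by fun_prop)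
    intro x hx
    simp only [Set.mem_Icc] at hx
    simp only [Set.mem_compl_iff, Set.mem_singleton_iff]
    intro h; linarith [hx.1]
  have h2 : ContinuousOn (fun ε : ℝ => Real.log (1-ε)) (Set.Icc 0 (31/32 : ℝ)) := by
    apply Real.continuousOn_log.comp (by fun_prop)
    intro x hx
    simp only [Set.mem_Icc] at hx
    simp only [Set.mem_compl_iff, Set.mem_singleton_iff]
    intro h; linarith [hx.2]
  have : ContinuousOn (fun ε : ℝ =>
      ((1+ε) * (Real.log (1+ε) / Real.log 2) + (1-ε) * (Real.log (1-ε) / Real.log 2)) / 2)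
      (Set.Icc 0 (31/32 : ℝ)) := by fun_prop
  exact this.congr (fun x _ => by simp [g, Real.logb])

lemma g_ge : (3/4 : ℝ) ≤ g (31/32) := by
  have l2 : (0:ℝ) < Real.log 2 := Real.log_pos one_lt_two
  have hnum : (2:ℝ)^(53:ℕ) ≤ ((63:ℝ)/32)^(63:ℕ) := by
    rw [div_pow, le_div_iff₀ (by positivity)]
    norm_num
  have hlog : (53:ℝ) * Real.log 2 ≤ 63 * Real.log (63/32) := by
    have := Real.log_le_log (by positivity) hnum
    rwa [Real.log_pow, Real.log_pow, Nat.cast_ofNat] at this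
  have hlogb : (53:ℝ)/63 ≤ Real.logb 2 (63/32) := by
    rw [Real.logb, le_div_iff₀ l2, div_mul_eq_mul_div, div_le_iff₀ (by norm_num : (0:ℝ) < 63)]
    linarith
  have h32 : Real.logb 2 (1/32 : ℝ) = -5 := by
    rw [Real.logb, show (1/32:ℝ) = (32:ℝ)⁻¹ from by norm_num, Real.log_inv,
      show (32:ℝ) = 2^(5:ℕ) from by norm_num, Real.log_pow]
    field_simp
    norm_num
  have : g (31/32) = (63/32) * Real.logb 2 (63/32) / 2 + (1/32) * (-5) / 2 := by
    rw [g, show (1:ℝ) + 31/32 = 63/32 by norm_num, show (1:ℝ) - 31/32 = 1/32 by norm_num, h32]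
    ring
  rw [this]
  nlinarith [hlogb]

lemma sum_margXY (p : Om × Om × Om → ℝ) : ∑ w, margXY p w = ∑ w, p w := by
  simp [Fintype.sum_prod_type, Fintype.sum_bool, margXY]
  try ring
lemma sum_margYZ (p : Om × Om × Om → ℝ) : ∑ w, margYZ p w = ∑ w, p w := by
  simp [Fintype.sum_prod_type, Fintype.sum_bool, margYZ]
  try ring

lemma sum_dataProb {N : ℕ} (p : Om × Om × Om → ℝ) (hp : ∑ w, p w = 1) :
    ∑ d : Dataset N, dataProb p d = 1 := by
  have h1 : ∑ w, margXY p w = 1 := by rw [sum_margXY, hp]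
  have h2 : ∑ w, margYZ p w = 1 := by rw [sum_margYZ, hp]
  have step1 : ∑ d : Dataset N, dataProb p d
      = ∑ f : Fin N → Om × Om, ∑ g : Fin N → Om × Om,
          (∏ i, margXY p (f i)) * (∏ i, margYZ p (g i)) := Fintype.sum_prod_type _
  rw [step1, ← Finset.sum_mul_sum, ← Fintype.sum_pow, ← Fintype.sum_pow, h1, h2,
    one_pow, one_mul]

lemma dataProb_nonneg {N : ℕ} (p : Om × Om × Om → ℝ) (hp : ∀ w, 0 ≤ p w) (d : Dataset N) :
    0 ≤ dataProb p d := by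
  apply mul_nonneg <;> apply Finset.prod_nonneg <;> intro i _
  · exact Finset.sum_nonneg fun z _ => hp _
  · exact Finset.sum_nonneg fun x _ => hp _

lemma dataEventProb_le_one {N : ℕ} (p : Om × Om × Om → ℝ) (hp : ∀ w, 0 ≤ p w)
    (hp1 : ∑ w, p w = 1) (E : Dataset N → Prop) : dataEventProb p E ≤ 1 := by
  rw [dataEventProb, ← sum_dataProb p hp1 (N := N)]
  apply Finset.sum_le_sum
  intro d _
  split_ifs
  · exact le_refl _
  · exact dataProb_nonneg p hp d

lemma dataProb_pd_eq {N : ℕ} (ε : ℝ) (d : Dataset N) :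
    dataProb (pd (-ε)) d = dataProb (pd ε) d := by
  unfold dataProb
  rw [margXY_pd, margYZ_pd, margXY_pd, margYZ_pd]

end MB

/-- **Theorem 2 of the paper (KL version).**  For every `s ∈ [0,1]`, every `N`, and
every estimator `P̂` (an arbitrary function of the dataset valued in distributions on
Ω³), the worst-case probability over `P ∈ S(s)` that `KL(P ‖ P̂(D_N(P))) ≥ s²/2` is at
least `1/2`. -/
theorem memory_bottleneck_lower_bound_KL
    (s : ℝ) (hs : s ∈ Set.Icc (0 : ℝ) 1) (N : ℕ)
    (est : Dataset N → Dist3) :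
    (1 : ℝ) / 2 ≤
      sSup {r : ℝ | ∃ P ∈ Sclass s,
        r = dataEventProb P.1
              (fun d => ((s ^ 2 / 2 : ℝ) : EReal) ≤ klDiv2 P.1 (est d).1)} := by
  obtain ⟨hs0, hs1⟩ := hs
  set t : ℝ := s * (s + 2) / 4 with ht_def
  have ht0 : 0 ≤ t := by positivity
  have ht34 : t ≤ 3/4 := by nlinarith
  have hts : t ≤ s := by nlinarith
  have hst : s^2/2 ≤ t := by nlinarith
  -- choose ε with g ε = t by the intermediate value theorem
  have hivt := intermediate_value_Icc (by norm_num : (0:ℝ) ≤ 31/32) MB.g_cont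
  have htmem : t ∈ Set.Icc (MB.g 0) (MB.g (31/32)) := by
    rw [MB.g_zero]
    exact ⟨ht0, le_trans ht34 MB.g_ge⟩
  obtain ⟨ε, hεI, hgε⟩ := hivt htmem
  obtain ⟨hε0, hε31⟩ := hεI
  have h1 : (-1 : ℝ) < ε := by linarith
  have h2 : ε < 1 := by linarith
  have h1' : (-1 : ℝ) < -ε := by linarith
  have h2' : -ε < 1 := by linarith
  -- the two data-generating distributions
  set Pp : Dist3 := ⟨MB.pd ε, fun w => MB.pd_nonneg (by linarith) (by linarith) w, MB.sum_pd ε⟩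
    with hPp
  set Pm : Dist3 := ⟨MB.pd (-ε), fun w => MB.pd_nonneg (by linarith) (by linarith) w,
    MB.sum_pd (-ε)⟩ with hPm
  have hPpS : Pp ∈ Sclass s := by
    show cmiXZ_Y (MB.pd ε) ≤ s
    rw [MB.cmi_pd h1 h2, hgε]; exact hts
  have hPmS : Pm ∈ Sclass s := by
    show cmiXZ_Y (MB.pd (-ε)) ≤ s
    rw [MB.cmi_pd h1' h2', MB.g_neg, hgε]; exact hts
  -- the two success probabilities
  set rp : ℝ := dataEventProb (MB.pd ε)
    (fun d => ((s ^ 2 / 2 : ℝ) : EReal) ≤ klDiv2 (MB.pd ε) (est d).1) with hrp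
  set rm : ℝ := dataEventProb (MB.pd (-ε))
    (fun d => ((s ^ 2 / 2 : ℝ) : EReal) ≤ klDiv2 (MB.pd (-ε)) (est d).1) with hrm
  have hmemp : rp ∈ {r : ℝ | ∃ P ∈ Sclass s,
      r = dataEventProb P.1 (fun d => ((s ^ 2 / 2 : ℝ) : EReal) ≤ klDiv2 P.1 (est d).1)} :=
    ⟨Pp, hPpS, rfl⟩
  have hmemm : rm ∈ {r : ℝ | ∃ P ∈ Sclass s,
      r = dataEventProb P.1 (fun d => ((s ^ 2 / 2 : ℝ) : EReal) ≤ klDiv2 P.1 (est d).1)} :=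
    ⟨Pm, hPmS, rfl⟩
  have hbdd : BddAbove {r : ℝ | ∃ P ∈ Sclass s,
      r = dataEventProb P.1 (fun d => ((s ^ 2 / 2 : ℝ) : EReal) ≤ klDiv2 P.1 (est d).1)} := by
    refine ⟨1, fun r hr => ?_⟩
    obtain ⟨P, _, hPr⟩ := hr
    rw [hPr]
    exact MB.dataEventProb_le_one P.1 P.2.1 P.2.2 _
  -- the sum of the two probabilities is at least 1
  have hsum_ge : 1 ≤ rp + rm := by
    have hone := MB.sum_dataProb (N := N) (MB.pd ε) (MB.sum_pd ε)
    rw [hrp, hrm, dataEventProb, dataEventProb, ← Finset.sum_add_distrib]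
    refine le_trans (le_of_eq hone.symm) ?_
    apply Finset.sum_le_sum
    intro d _
    have hdp := MB.dataProb_pd_eq (N := N) ε d
    have hnn : 0 ≤ dataProb (MB.pd ε) d :=
      MB.dataProb_nonneg _ (fun w => MB.pd_nonneg (by linarith) (by linarith) w) d
    have hdisj := MB.kl_lower (s' := s^2/2) h1 h2 (by rw [hgε]; exact hst) (est d)
    rcases hdisj with hd | hd
    · rw [if_pos hd]
      rcases Classical.em (((s ^ 2 / 2 : ℝ) : EReal) ≤ klDiv2 (MB.pd (-ε)) (est d).1) with h | h
      · rw [if_pos h, hdp]; linarith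
      · rw [if_neg h]; linarith
    · rw [if_pos hd, hdp]
      rcases Classical.em (((s ^ 2 / 2 : ℝ) : EReal) ≤ klDiv2 (MB.pd ε) (est d).1) with h | h
      · rw [if_pos h]; linarith
      · rw [if_neg h]; linarith
  rcases le_or_gt (1/2 : ℝ) rp with hc | hc
  · exact le_trans hc (le_csSup hbdd hmemp)
  · exact le_trans (by linarith : (1:ℝ)/2 ≤ rm) (le_csSup hbdd hmemm)


end
end

section
/- For every ε ∈ [0, 1/2], one has 1 − 2ε − (1 − ε) log₂(2(1 − ε)) ≥ 0; equivalently, for every ε ∈ [0, 1/2), (1 − 2ε) / ( 2(1 − ε) log₂(2(1 − ε)) ) ≥ 1/2. -/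
/-!
Statement 8: for every ε ∈ [0, 1/2], 1 − 2ε − (1 − ε)·log₂(2(1 − ε)) ≥ 0;
equivalently, for every ε ∈ [0, 1/2), (1 − 2ε) / ( 2(1 − ε)·log₂(2(1 − ε)) ) ≥ 1/2.
-/

/-- Concavity estimate: for x ∈ [1/2, 1], (1 - x) log 2 ≤ -x log x. -/
lemma key_aux {x : ℝ} (h1 : 1 / 2 ≤ x) (h2 : x ≤ 1) :
    (1 - x) * Real.log 2 ≤ -(x * Real.log x) := by
  have hcc := Real.concaveOn_negMulLog
  have h := hcc.2 (show (1/2:ℝ) ∈ Set.Ici 0 by norm_num)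
    (show (1:ℝ) ∈ Set.Ici 0 by norm_num)
    (show (0:ℝ) ≤ 2 - 2*x by linarith) (show (0:ℝ) ≤ 2*x - 1 by linarith)
    (show (2 - 2*x) + (2*x - 1) = 1 by ring)
  have hx : (2 - 2*x) • (1/2:ℝ) + (2*x - 1) • (1:ℝ) = x := by
    simp [smul_eq_mul]; ring
  rw [hx] at h
  have hlog12 : Real.log (1/2 : ℝ) = -Real.log 2 := by
    rw [show (1/2:ℝ) = 2⁻¹ by norm_num, Real.log_inv]
  simp only [Real.negMulLog, Real.log_one, hlog12, smul_eq_mul] at h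
  nlinarith [h]

/-- The analytic inequality behind the paper's Proposition prop:dist_bd. -/
theorem key_analytic_inequality :
    (∀ ε ∈ Set.Icc (0 : ℝ) (1 / 2),
      0 ≤ 1 - 2 * ε - (1 - ε) * Real.logb 2 (2 * (1 - ε))) ∧
    (∀ ε ∈ Set.Ico (0 : ℝ) (1 / 2),
      (1 : ℝ) / 2 ≤ (1 - 2 * ε) / (2 * (1 - ε) * Real.logb 2 (2 * (1 - ε)))) := by
  have hlog2 : (0:ℝ) < Real.log 2 := Real.log_pos one_lt_two
  have part1 : ∀ ε ∈ Set.Icc (0 : ℝ) (1 / 2),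
      0 ≤ 1 - 2 * ε - (1 - ε) * Real.logb 2 (2 * (1 - ε)) := by
    rintro ε ⟨he0, he1⟩
    have hxpos : (0:ℝ) < 1 - ε := by linarith
    have hlogb : Real.logb 2 (2 * (1 - ε)) = 1 + Real.log (1 - ε) / Real.log 2 := by
      rw [Real.logb, Real.log_mul (by norm_num) (ne_of_gt hxpos)]
      field_simp
    have key := key_aux (x := 1 - ε) (by linarith) (by linarith)
    have expand : 1 - 2 * ε - (1 - ε) * Real.logb 2 (2 * (1 - ε))
        = (-(( 1 - ε) * Real.log (1 - ε)) - (1 - (1 - ε)) * Real.log 2) / Real.log 2 := by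
      rw [hlogb]; field_simp; ring
    rw [expand]
    apply div_nonneg _ hlog2.le
    linarith
  refine ⟨part1, ?_⟩
  rintro ε ⟨he0, he1⟩
  have hxpos : (1:ℝ) < 2 * (1 - ε) := by linarith
  have hlb : 0 < Real.logb 2 (2 * (1 - ε)) := Real.logb_pos one_lt_two hxpos
  have hden : 0 < 2 * (1 - ε) * Real.logb 2 (2 * (1 - ε)) := by positivity
  rw [le_div_iff₀ hden]
  have := part1 ε ⟨he0, by linarith⟩
  linarith
end

section
/- For every integer i ≥ 2Δ, the index–level sets satisfy G(i − Δ) = H(i) ∪ { (i + j, t_jᴵ) : j ∈ [w − Δ] }. -/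
/-!
Statement 9 (the paper's Proposition prop:h_g): under the requirements on the input
and output noise levels of the Meta-ARVDM framework (monotonicity, 0–T boundary,
circularity, and the block structure of the input levels), for every integer
i ≥ 2Δ the index–level sets satisfy
  G(i − Δ) = H(i) ∪ { (i + j, t_jᴵ) : j ∈ [w − Δ] }.
-/

noncomputable section

/-- `S^I`: the set of starting indices of each distinct input noise level,
`S^I = { min{ j ∈ [w] : t_jᴵ = t_iᴵ } : i ∈ [w] }`. -/
def SIset (w : ℕ) (tI : ℕ → ℝ) : Set ℕ :=
  (fun i => sInf {j | j ∈ Set.Icc 1 w ∧ tI j = tI i}) '' Set.Icc 1 w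

/-- The history set
`H(i) = {(m, 0) : 1 ≤ m ≤ i} ∪ ⋃_{j ∈ S^I} {(m, t_jᴵ) : 1 ≤ m ≤ i + j − 1}`
of (frame index, noise level) pairs. -/
def Hset (w : ℕ) (tI : ℕ → ℝ) (i : ℕ) : Set (ℕ × ℝ) :=
  {p | 1 ≤ p.1 ∧ p.1 ≤ i ∧ p.2 = 0} ∪
    ⋃ j ∈ SIset w tI, {p | 1 ≤ p.1 ∧ p.1 ≤ i + j - 1 ∧ p.2 = tI j}

/-- The generated set
`G(i) = H(i) ∪ {(i + j, t_jᴵ) : j ∈ [w]} ∪ {(i + j, t_jᴼ) : j ∈ [w]}`. -/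
def Gset (w : ℕ) (tI tO : ℕ → ℝ) (i : ℕ) : Set (ℕ × ℝ) :=
  Hset w tI i ∪
    {p | ∃ j, 1 ≤ j ∧ j ≤ w ∧ p = (i + j, tI j)} ∪
    {p | ∃ j, 1 ≤ j ∧ j ≤ w ∧ p = (i + j, tO j)}

/-- The infimum defining `S^I` is the start of the block containing `i`. -/
lemma sInf_block (w Δ : ℕ) (hΔ : 0 < Δ) (tI : ℕ → ℝ)
    (hblock : ∀ j k, 1 ≤ j → j ≤ w → 1 ≤ k → k ≤ w →
      (tI j = tI k ↔ (j - 1) / Δ = (k - 1) / Δ))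
    (i : ℕ) (hi1 : 1 ≤ i) (hiw : i ≤ w) :
    sInf {j | j ∈ Set.Icc 1 w ∧ tI j = tI i} = Δ * ((i - 1) / Δ) + 1 := by
  set q := (i - 1) / Δ with hq
  have hΔq : Δ * q ≤ i - 1 := by
    rw [mul_comm]; exact Nat.div_mul_le_self _ _
  have hj0w : Δ * q + 1 ≤ w := by omega
  have hj0div : (Δ * q + 1 - 1) / Δ = q := by
    simp [Nat.mul_div_cancel_left _ hΔ]
  have hmem : Δ * q + 1 ∈ {j | j ∈ Set.Icc 1 w ∧ tI j = tI i} :=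
    ⟨Set.mem_Icc.mpr ⟨by omega, hj0w⟩,
      (hblock _ _ (by omega) hj0w hi1 hiw).mpr hj0div⟩
  refine le_antisymm (Nat.sInf_le hmem) ?_
  obtain ⟨hIcc, h3⟩ := Nat.sInf_mem (⟨_, hmem⟩ : Set.Nonempty _)
  obtain ⟨h1, h2⟩ := Set.mem_Icc.mp hIcc
  have hdiv : (sInf {j | j ∈ Set.Icc 1 w ∧ tI j = tI i} - 1) / Δ = q :=
    (hblock _ _ h1 h2 hi1 hiw).mp h3
  have : Δ * q ≤ sInf {j | j ∈ Set.Icc 1 w ∧ tI j = tI i} - 1 := by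
    rw [mul_comm]; exact (Nat.le_div_iff_mul_le hΔ).mp hdiv.ge
  omega

/-- Characterization of `S^I` under the block assumption. -/
lemma SIset_char (w Δ : ℕ) (hΔ : 0 < Δ) (tI : ℕ → ℝ)
    (hblock : ∀ j k, 1 ≤ j → j ≤ w → 1 ≤ k → k ≤ w →
      (tI j = tI k ↔ (j - 1) / Δ = (k - 1) / Δ)) :
    SIset w tI = {j | ∃ q, j = Δ * q + 1 ∧ j ≤ w} := by
  ext j
  constructor
  · rintro ⟨i, hi, rfl⟩
    obtain ⟨hi1, hiw⟩ := Set.mem_Icc.mp hi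
    show sInf {j | j ∈ Set.Icc 1 w ∧ tI j = tI i} ∈ _
    rw [sInf_block w Δ hΔ tI hblock i hi1 hiw]
    refine ⟨(i - 1) / Δ, rfl, ?_⟩
    have : Δ * ((i - 1) / Δ) ≤ i - 1 := by
      rw [mul_comm]; exact Nat.div_mul_le_self _ _
    omega
  · rintro ⟨q, rfl, hw⟩
    refine ⟨Δ * q + 1, Set.mem_Icc.mpr ⟨by omega, hw⟩, ?_⟩
    show sInf {j | j ∈ Set.Icc 1 w ∧ tI j = tI (Δ * q + 1)} = _
    rw [sInf_block w Δ hΔ tI hblock _ (by omega) hw]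
    congr 1
    simp [Nat.mul_div_cancel_left _ hΔ]

/-- **Proposition prop:h_g.**  Under the Meta-ARVDM requirements on the noise levels,
for every `i ≥ 2Δ`, `G(i − Δ) = H(i) ∪ {(i + j, t_jᴵ) : j ∈ [w − Δ]}`. -/
theorem generated_history_recursion
    (T : ℝ) (hT : 0 < T) (w Δ : ℕ) (hΔ : 0 < Δ) (hΔw : Δ ≤ w) (hdvd : Δ ∣ w)
    (tI tO : ℕ → ℝ)
    -- noise levels lie in [0, T]
    (hrange : ∀ j, 1 ≤ j → j ≤ w → tI j ∈ Set.Icc 0 T ∧ tO j ∈ Set.Icc 0 T)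
    -- monotonicity
    (hmonoI : ∀ j k, 1 ≤ j → j ≤ k → k ≤ w → tI j ≤ tI k)
    (hmonoO : ∀ j k, 1 ≤ j → j ≤ k → k ≤ w → tO j ≤ tO k)
    (hIO : ∀ j, 1 ≤ j → j ≤ w → tO j < tI j)
    -- 0–T boundary
    (hbdryI : ∀ j, w - Δ + 1 ≤ j → j ≤ w → tI j = T)
    (hbdryO : ∀ j, 1 ≤ j → j ≤ Δ → tO j = 0)
    -- circularity
    (hcirc : ∀ j, 1 ≤ j → j ≤ w - Δ → tI j = tO (Δ + j))
    -- each distinct input noise level occurs exactly Δ times as a consecutive block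
    (hblock : ∀ j k, 1 ≤ j → j ≤ w → 1 ≤ k → k ≤ w →
      (tI j = tI k ↔ (j - 1) / Δ = (k - 1) / Δ)) :
    ∀ i : ℕ, 2 * Δ ≤ i →
      Gset w tI tO (i - Δ) =
        Hset w tI i ∪ {p | ∃ j, 1 ≤ j ∧ j ≤ w - Δ ∧ p = (i + j, tI j)} := by
  intro i hi
  obtain ⟨c, hc⟩ := hdvd
  have hS := SIset_char w Δ hΔ tI hblock
  ext ⟨m, x⟩
  simp only [Gset, Hset, hS, Set.mem_union, Set.mem_iUnion, Set.mem_setOf_eq,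
    exists_prop, Prod.mk.injEq]
  constructor
  · rintro (((⟨h1, h2, rfl⟩ | ⟨j, ⟨q, rfl, hjw⟩, h1, h2, rfl⟩) |
      ⟨j, hj1, hjw, rfl, rfl⟩) | ⟨j, hj1, hjw, rfl, rfl⟩)
    · exact Or.inl (Or.inl ⟨h1, by omega, rfl⟩)
    · exact Or.inl (Or.inr ⟨Δ * q + 1, ⟨q, rfl, hjw⟩, h1, by omega, rfl⟩)
    · -- input-level part of G(i-Δ)
      set q := (j - 1) / Δ with hq
      have hmod : Δ * q + (j - 1) % Δ = j - 1 := Nat.div_add_mod (j - 1) Δ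
      have hmlt : (j - 1) % Δ < Δ := Nat.mod_lt _ hΔ
      have hqw : Δ * q + 1 ≤ w := by omega
      have htI : tI j = tI (Δ * q + 1) :=
        (hblock j _ hj1 hjw (by omega) hqw).mpr
          (by simp [← hq, Nat.mul_div_cancel_left _ hΔ])
      exact Or.inl (Or.inr ⟨Δ * q + 1, ⟨q, rfl, hqw⟩, by omega, by omega, htI⟩)
    · -- output-level part of G(i-Δ)
      rcases le_or_gt j Δ with hle | hlt
      · exact Or.inl (Or.inl ⟨by omega, by omega, hbdryO j hj1 hle⟩)
      · have htO : tI (j - Δ) = tO j := by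
          have h := hcirc (j - Δ) (by omega) (by omega)
          rwa [show Δ + (j - Δ) = j by omega] at h
        exact Or.inr ⟨j - Δ, by omega, by omega, by omega, htO.symm⟩
  · rintro ((⟨h1, h2, rfl⟩ | ⟨j, ⟨q, rfl, hjw⟩, h1, h2, hx⟩) | ⟨j, hj1, hjw, rfl, rfl⟩)
    · -- zero part of H(i)
      rcases le_or_gt m (i - Δ) with hle | hlt
      · exact Or.inl (Or.inl (Or.inl ⟨h1, hle, rfl⟩))
      · exact Or.inr ⟨m - (i - Δ), by omega, by omega, by omega,
          (hbdryO (m - (i - Δ)) (by omega) (by omega)).symm⟩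
    · -- union part of H(i), block q
      rcases le_or_gt m (i - Δ + Δ * q) with hle | hlt
      · exact Or.inl (Or.inl (Or.inr ⟨Δ * q + 1, ⟨q, rfl, hjw⟩, h1, by omega, hx⟩))
      · set j := m - (i - Δ) with hj
        have hqc : q < c := by
          have hmul : Δ * q < Δ * c := by omega
          exact lt_of_mul_lt_mul_left hmul (Nat.zero_le _)
        have hq1w : Δ * q + Δ ≤ w := by
          have h := Nat.mul_le_mul_left Δ hqc
          rw [Nat.mul_succ] at h
          omega
        have hjw' : j ≤ w := by omega
        have hdivj : (j - 1) / Δ = q :=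
          Nat.div_eq_of_lt_le (by rw [Nat.mul_comm q Δ]; omega)
            (by rw [Nat.succ_mul, Nat.mul_comm q Δ]; omega)
        have htIj : tI j = tI (Δ * q + 1) :=
          (hblock j (Δ * q + 1) (by omega) hjw' (by omega) hjw).mpr
            (by rw [hdivj]; simp [Nat.mul_div_cancel_left _ hΔ])
        exact Or.inl (Or.inr ⟨j, by omega, hjw', by omega, by rw [hx, ← htIj]⟩)
    · -- the new frontier set
      exact Or.inr ⟨Δ + j, by omega, by omega, by omega, hcirc j hj1 hjw⟩

end
end
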